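/- arXiv:2605.02253 — 6 statements merged into one kernel-verified Lean document; each statement's English description precedes it below -/
import Mathlib

section
/- Let τ ∈ (0,1), D > 0, and let ε be a real random variable whose law is dominated by D times Lebesgue measure. Then for every u ∈ ℝ, E[(ψ_τ(ε + u) − ψ_τ(ε − u))²] ≤ 2D|u|. -/
open MeasureTheory

/-- The quantile score `ψ_τ(v) = τ − 1{v < 0}`. -/
noncomputable def quantileScore (τ v : ℝ) : ℝ := τ - if v < 0 then 1 else 0

/-- if the law of `ε` is dominated by `D` times Lebesgue measure, then
for every `u ∈ ℝ`, `E[(ψ_τ(ε + u) − ψ_τ(ε − u))²] ≤ 2D|u|`. -/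
theorem stmt_4 {Ω : Type*} [MeasurableSpace Ω] (P : Measure Ω) [IsProbabilityMeasure P]
    (τ D : ℝ) (hτ : τ ∈ Set.Ioo (0 : ℝ) 1) (hD : 0 < D)
    (ε : Ω → ℝ) (hε : Measurable ε)
    (hdom : ∀ B : Set ℝ, MeasurableSet B →
      P (ε ⁻¹' B) ≤ ENNReal.ofReal D * volume B)
    (u : ℝ) :
    ∫ ω, (quantileScore τ (ε ω + u) - quantileScore τ (ε ω - u)) ^ 2 ∂P
      ≤ 2 * D * |u| := by
  classical
  set S : Set ℝ := Set.Ico (-|u|) |u| with hS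
  have hpt : ∀ ω, (quantileScore τ (ε ω + u) - quantileScore τ (ε ω - u)) ^ 2
      = (ε ⁻¹' S).indicator (fun _ => (1 : ℝ)) ω := by
    intro ω
    set v := ε ω with hv
    have hmem : (ε ⁻¹' S).indicator (fun _ => (1 : ℝ)) ω
        = if v ∈ S then (1 : ℝ) else 0 := by
      rw [Set.indicator_apply]
      simp only [Set.mem_preimage, ← hv]
    rw [hmem]
    simp only [quantileScore]
    by_cases h1 : v + u < 0 <;> by_cases h2 : v - u < 0
    · have hn : v ∉ S := by
        rw [hS]; simp only [Set.mem_Ico, not_and, not_lt]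
        intro hge
        rcases abs_cases u with ⟨e, hu⟩ | ⟨e, hu⟩ <;> rw [e] at hge ⊢ <;> linarith
      rw [if_pos h1, if_pos h2, if_neg hn]; ring
    · have hm : v ∈ S := by
        rw [hS]; simp only [Set.mem_Ico]
        rcases abs_cases u with ⟨e, hu⟩ | ⟨e, hu⟩ <;> rw [e] <;>
          constructor <;> linarith
      rw [if_pos h1, if_neg h2, if_pos hm]; ring
    · have hm : v ∈ S := by
        rw [hS]; simp only [Set.mem_Ico]
        rcases abs_cases u with ⟨e, hu⟩ | ⟨e, hu⟩ <;> rw [e] <;>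
          constructor <;> linarith
      rw [if_neg h1, if_pos h2, if_pos hm]; ring
    · have hn : v ∉ S := by
        rw [hS]; simp only [Set.mem_Ico, not_and, not_lt]
        intro hge
        rcases abs_cases u with ⟨e, hu⟩ | ⟨e, hu⟩ <;> rw [e] <;> linarith
      rw [if_neg h1, if_neg h2, if_neg hn]; ring
  rw [integral_congr_ae (Filter.Eventually.of_forall hpt)]
  have hmeas : MeasurableSet (ε ⁻¹' S) := hε measurableSet_Ico
  have hint : ∫ ω, (ε ⁻¹' S).indicator (fun _ => (1 : ℝ)) ω ∂P
      = (P (ε ⁻¹' S)).toReal := by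
    rw [integral_indicator hmeas]; simp; rfl
  rw [hint]
  have hle : P (ε ⁻¹' S) ≤ ENNReal.ofReal (2 * D * |u|) := by
    calc P (ε ⁻¹' S) ≤ ENNReal.ofReal D * volume S := hdom S measurableSet_Ico
    _ = ENNReal.ofReal D * ENNReal.ofReal (|u| - (-|u|)) := by
        rw [hS, Real.volume_Ico]
    _ = ENNReal.ofReal (2 * D * |u|) := by
        rw [← ENNReal.ofReal_mul hD.le]; ring_nf
  exact ENNReal.toReal_le_of_le_ofReal (by positivity) hle
end

section
/- Let τ ∈ (0,1) and let ε, ε′ be real random variables on a common probability space with E|ε − ε′| < ∞. Then for every η > 0, E[(ψ_τ(ε) − ψ_τ(ε′))⁴] ≤ P(|ε| ≤ η) + η^{−1}·E|ε − ε′|. -/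
open MeasureTheory

/-- for real random variables `ε, ε′` on a common probability space with
`E|ε − ε′| < ∞`, and every `η > 0`,
`E[(ψ_τ(ε) − ψ_τ(ε′))⁴] ≤ P(|ε| ≤ η) + η⁻¹·E|ε − ε′|`. -/
theorem stmt_5 {Ω : Type*} [MeasurableSpace Ω] (P : Measure Ω) [IsProbabilityMeasure P]
    (τ : ℝ) (hτ : τ ∈ Set.Ioo (0 : ℝ) 1)
    (ε ε' : Ω → ℝ) (hε : Measurable ε) (hε' : Measurable ε')
    (hint : Integrable (fun ω => |ε ω - ε' ω|) P)
    (η : ℝ) (hη : 0 < η) :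
    ∫ ω, (quantileScore τ (ε ω) - quantileScore τ (ε' ω)) ^ 4 ∂P
      ≤ (P {ω | |ε ω| ≤ η}).toReal + η⁻¹ * ∫ ω, |ε ω - ε' ω| ∂P := by
  set A : Set Ω := {ω | |ε ω| ≤ η} with hA
  have hAmeas : MeasurableSet A := measurableSet_le hε.abs measurable_const
  -- pointwise bound
  have hbound : ∀ ω, (quantileScore τ (ε ω) - quantileScore τ (ε' ω)) ^ 4
      ≤ A.indicator (fun _ => (1:ℝ)) ω + η⁻¹ * |ε ω - ε' ω| := by
    intro ω
    have hind : (0:ℝ) ≤ A.indicator (fun _ => (1:ℝ)) ω :=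
      Set.indicator_nonneg (fun _ _ => zero_le_one) ω
    have habs : (0:ℝ) ≤ η⁻¹ * |ε ω - ε' ω| :=
      mul_nonneg (by positivity) (abs_nonneg _)
    have key : (ε ω < 0 ↔ ε' ω < 0) ∨
        ((1:ℝ) ≤ A.indicator (fun _ => (1:ℝ)) ω + η⁻¹ * |ε ω - ε' ω|) := by
      by_cases hiff : (ε ω < 0 ↔ ε' ω < 0)
      · exact Or.inl hiff
      · right
        by_cases hωA : ω ∈ A
        · rw [Set.indicator_of_mem hωA]
          linarith
        · -- |ε ω| > η and signs differ, so |ε ω - ε' ω| ≥ |ε ω| > η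
          have hgt : η < |ε ω| := lt_of_not_ge hωA
          have hd : η ≤ |ε ω - ε' ω| := by
            by_cases h1 : ε ω < 0
            · have h2 : ¬ ε' ω < 0 := fun h => hiff ⟨fun _ => h, fun _ => h1⟩
              push_neg at h2
              have he : |ε ω| = -(ε ω) := abs_of_neg h1
              have : |ε ω - ε' ω| = ε' ω - ε ω := by
                rw [abs_of_nonpos (by linarith)]; ring
              rw [this]; linarith
            · have h2 : ε' ω < 0 := by
                by_contra h2; exact hiff ⟨fun a => absurd a h1, fun a => absurd a h2⟩
              push_neg at h1
              have he : |ε ω| = ε ω := abs_of_nonneg h1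
              have : |ε ω - ε' ω| = ε ω - ε' ω := abs_of_nonneg (by linarith)
              rw [this]; linarith
          have : (1:ℝ) ≤ η⁻¹ * |ε ω - ε' ω| := by
            have := mul_le_mul_of_nonneg_left hd (inv_nonneg.mpr hη.le)
            simpa [inv_mul_cancel₀ hη.ne'] using this
          linarith [hind]
    unfold quantileScore
    rcases key with hiff | hge
    · by_cases h1 : ε ω < 0
      · simp [h1, hiff.mp h1]; linarith
      · simp [h1, (not_iff_not.mpr hiff).mp h1]; linarith
    · by_cases h1 : ε ω < 0 <;> by_cases h2 : ε' ω < 0 <;> simp [h1, h2] <;>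
        [skip; (ring_nf; linarith); (ring_nf; linarith); skip] <;> linarith
  -- integrability
  have hfmeas : Measurable fun ω => (quantileScore τ (ε ω) - quantileScore τ (ε' ω)) ^ 4 := by
    unfold quantileScore
    apply Measurable.pow_const
    apply Measurable.sub <;> apply Measurable.sub measurable_const
    · exact Measurable.ite (measurableSet_lt hε measurable_const) measurable_const measurable_const
    · exact Measurable.ite (measurableSet_lt hε' measurable_const) measurable_const measurable_const
  have hfint : Integrable (fun ω => (quantileScore τ (ε ω) - quantileScore τ (ε' ω)) ^ 4) P := by
    apply (integrable_const (1:ℝ)).mono' hfmeas.aestronglyMeasurable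
    filter_upwards with ω
    unfold quantileScore
    by_cases h1 : ε ω < 0 <;> by_cases h2 : ε' ω < 0 <;> simp [h1, h2] <;> norm_num
  have hgint : Integrable (fun ω => A.indicator (fun _ => (1:ℝ)) ω + η⁻¹ * |ε ω - ε' ω|) P := by
    exact ((integrable_const (1:ℝ)).indicator hAmeas).add (hint.const_mul _)
  calc ∫ ω, (quantileScore τ (ε ω) - quantileScore τ (ε' ω)) ^ 4 ∂P
      ≤ ∫ ω, (A.indicator (fun _ => (1:ℝ)) ω + η⁻¹ * |ε ω - ε' ω|) ∂P :=
        integral_mono hfint hgint hbound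
    _ = (∫ ω, A.indicator (fun _ => (1:ℝ)) ω ∂P) + ∫ ω, η⁻¹ * |ε ω - ε' ω| ∂P :=
        integral_add ((integrable_const (1:ℝ)).indicator hAmeas) (hint.const_mul _)
    _ = (P A).toReal + η⁻¹ * ∫ ω, |ε ω - ε' ω| ∂P := by
        rw [integral_indicator_const, integral_const_mul]
        · simp [measureReal_def]
        · exact hAmeas
end

section
/- Let c > 0 and let ε be a real random variable on a probability space (Ω, P). Then for every x ∈ ℝ, E[ψ_c(ε + x) − ψ_c(ε)] = ∫_0^x P(−c < ε + t < c) dt, where the right-hand side is the oriented integral over the interval from 0 to x. -/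
open MeasureTheory

/-- The Huber score `ψ_c(v) = v` if `|v| ≤ c`, and `ψ_c(v) = c·sign(v)` if `|v| > c`. -/
noncomputable def huberScore (c v : ℝ) : ℝ := if |v| ≤ c then v else c * Real.sign v

lemma huberScore_eq {c : ℝ} (hc : 0 < c) (v : ℝ) :
    huberScore c v = max (-c) (min v c) := by
  unfold huberScore
  rcases le_or_gt (|v|) c with h | h
  · rcases abs_le.1 h with ⟨h1, h2⟩
    rw [if_pos h, min_eq_left h2, max_eq_right h1]
  · rw [if_neg (not_le.2 h)]
    rcases lt_or_ge v 0 with hv | hv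
    · have hvc : v < -c := by rw [abs_of_neg hv] at h; linarith
      rw [Real.sign_of_neg hv, min_eq_left (by linarith), max_eq_left (by linarith)]
      ring
    · have hvc : c < v := by rwa [abs_of_nonneg hv] at h
      rw [Real.sign_of_pos (hc.trans hvc), min_eq_right hvc.le,
        max_eq_right (by linarith)]
      ring

lemma huber_hasDerivWithinAt {c : ℝ} (hc : 0 < c) (s : ℝ) :
    HasDerivWithinAt (huberScore c)
      (Set.indicator (Set.Ico (-c) c) (fun _ => (1 : ℝ)) s) (Set.Ioi s) s := by
  have hfun : huberScore c = fun v => max (-c) (min v c) := funext (huberScore_eq hc)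
  rw [hfun]
  rcases lt_or_ge s (-c) with h1 | h1
  · have hind : Set.indicator (Set.Ico (-c) c) (fun _ => (1 : ℝ)) s = 0 := by
      simp [Set.indicator_apply, Set.mem_Ico, not_le.2 h1]
    rw [hind]
    refine (hasDerivWithinAt_const s _ (-c)).congr_of_eventuallyEq ?_ ?_
    · filter_upwards [nhdsWithin_le_nhds (Iio_mem_nhds h1)] with y hy
      have hy' : y < -c := hy
      rw [min_eq_left (by linarith : y ≤ c), max_eq_left hy'.le]
    · rw [min_eq_left (by linarith : s ≤ c), max_eq_left h1.le]
  · rcases lt_or_ge s c with h2 | h2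
    · have hind : Set.indicator (Set.Ico (-c) c) (fun _ => (1 : ℝ)) s = 1 := by
        simp [Set.indicator_apply, Set.mem_Ico, h1, h2]
      rw [hind]
      refine (hasDerivWithinAt_id s _).congr_of_eventuallyEq ?_ ?_
      · have hio : Set.Ioi s ∈ nhdsWithin s (Set.Ioi s) := self_mem_nhdsWithin
        filter_upwards [nhdsWithin_le_nhds (Iio_mem_nhds h2), hio] with y hy hy'
        have h3 : y < c := hy
        have h4 : s < y := hy'
        rw [min_eq_left h3.le, max_eq_right (by linarith)]
        rfl
      · rw [min_eq_left h2.le, max_eq_right h1]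
        rfl
    · have hind : Set.indicator (Set.Ico (-c) c) (fun _ => (1 : ℝ)) s = 0 := by
        simp [Set.indicator_apply, Set.mem_Ico, not_lt.2 h2]
      rw [hind]
      refine (hasDerivWithinAt_const s _ c).congr_of_eventuallyEq ?_ ?_
      · filter_upwards [self_mem_nhdsWithin] with y hy
        have h4 : s < y := hy
        rw [min_eq_right (by linarith), max_eq_right (by linarith)]
      · rw [min_eq_right h2, max_eq_right (by linarith)]

lemma huber_continuous {c : ℝ} (hc : 0 < c) : Continuous (huberScore c) := by
  have hfun : huberScore c = fun v => max (-c) (min v c) := funext (huberScore_eq hc)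
  rw [hfun]
  exact continuous_const.max (continuous_id.min continuous_const)

lemma ind_intervalIntegrable (c a b : ℝ) :
    IntervalIntegrable (Set.indicator (Set.Ico (-c) c) (fun _ => (1 : ℝ))) volume a b := by
  rw [intervalIntegrable_iff]
  exact (((integrableOn_const_iff (C := (1 : ℝ)) enorm_ne_top).mpr (Or.inr measure_Ioc_lt_top)).indicator measurableSet_Ico)

lemma huber_sub_eq {c : ℝ} (hc : 0 < c) (e x : ℝ) :
    huberScore c (e + x) - huberScore c e
      = ∫ t in (0 : ℝ)..x, Set.indicator (Set.Ico (-c) c) (fun _ => (1 : ℝ)) (e + t) := by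
  rw [intervalIntegral.integral_comp_add_left, add_zero]
  exact (intervalIntegral.integral_eq_sub_of_hasDeriv_right
    ((huber_continuous hc).continuousOn)
    (fun s _ => huber_hasDerivWithinAt hc s) (ind_intervalIntegrable c e (e + x))).symm

/-- for `c > 0` and a real random variable `ε`, for every `x ∈ ℝ`,
`E[ψ_c(ε + x) − ψ_c(ε)] = ∫_0^x P(−c < ε + t < c) dt` (oriented integral). -/
theorem stmt_7 {Ω : Type*} [MeasurableSpace Ω] (P : Measure Ω) [IsProbabilityMeasure P]
    (c : ℝ) (hc : 0 < c) (ε : Ω → ℝ) (hε : Measurable ε) (x : ℝ) :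
    ∫ ω, (huberScore c (ε ω + x) - huberScore c (ε ω)) ∂P
      = ∫ t in (0 : ℝ)..x, (P {ω | -c < ε ω + t ∧ ε ω + t < c}).toReal := by
  set ind : ℝ → ℝ := Set.indicator (Set.Ico (-c) c) (fun _ => (1 : ℝ)) with hind_def
  -- Step 1: pointwise FTC
  have key : ∀ ω, huberScore c (ε ω + x) - huberScore c (ε ω)
      = ∫ t in (0 : ℝ)..x, ind (ε ω + t) := fun ω => huber_sub_eq hc (ε ω) x
  simp_rw [key]
  -- main swap for a ≤ b over Ioc a b
  have main : ∀ a b : ℝ,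
      ∫ ω, (∫ t in Set.Ioc a b, ind (ε ω + t)) ∂P
        = ∫ t in Set.Ioc a b, (P {ω | -c < ε ω + t ∧ ε ω + t < c}).toReal := by
    intro a b
    set μ : Measure ℝ := volume.restrict (Set.Ioc a b) with hμ
    haveI : Fact (volume (Set.Ioc a b) < ⊤) := ⟨measure_Ioc_lt_top⟩
    have hmeas : Measurable (Function.uncurry fun (ω : Ω) (t : ℝ) => ind (ε ω + t)) := by
      have : Measurable ind := (measurable_const.indicator measurableSet_Ico)
      exact this.comp ((hε.comp measurable_fst).add measurable_snd)
    have hint : Integrable (Function.uncurry fun (ω : Ω) (t : ℝ) => ind (ε ω + t))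
        (P.prod μ) := by
      refine (integrable_const (1 : ℝ)).mono' hmeas.aestronglyMeasurable ?_
      refine Filter.Eventually.of_forall fun p => ?_
      rw [Function.uncurry]
      simp only [hind_def, Set.indicator_apply]
      split <;> simp
    rw [integral_integral_swap hint]
    -- inner integral
    have inner : ∀ t : ℝ, (∫ ω, ind (ε ω + t) ∂P)
        = (P {ω | -c ≤ ε ω + t ∧ ε ω + t < c}).toReal := by
      intro t
      have heq : (fun ω => ind (ε ω + t))
          = Set.indicator {ω | -c ≤ ε ω + t ∧ ε ω + t < c} (fun _ => (1 : ℝ)) := by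
        funext ω
        simp only [hind_def, Set.indicator_apply, Set.mem_Ico, Set.mem_setOf_eq]
      rw [heq, integral_indicator_const]
      · simp [measureReal_def]
      · have : {ω | -c ≤ ε ω + t ∧ ε ω + t < c} = (fun ω => ε ω + t) ⁻¹' Set.Ico (-c) c := rfl
        rw [this]
        exact (hε.add_const t) measurableSet_Ico
    simp_rw [inner]
    -- a.e. in t, the closed-left endpoint has probability 0
    have hcnt : Set.Countable {t : ℝ | 0 < P {ω | ε ω = t}} :=
      Measure.countable_meas_level_set_pos hε
    have hbad : {t : ℝ | P {ω | ε ω = -c - t} ≠ 0}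
        ⊆ (fun y => -c - y) '' {t : ℝ | 0 < P {ω | ε ω = t}} := by
      intro t ht
      exact ⟨-c - t, by simpa [pos_iff_ne_zero] using ht, by ring⟩
    have hnull : (volume {t : ℝ | P {ω | ε ω = -c - t} ≠ 0}) = 0 :=
      measure_mono_null hbad ((hcnt.image _).measure_zero volume)
    have hae : ∀ᵐ t ∂μ, (P {ω | -c ≤ ε ω + t ∧ ε ω + t < c}).toReal
        = (P {ω | -c < ε ω + t ∧ ε ω + t < c}).toReal := by
      refine ae_restrict_of_ae ?_
      have : ∀ᵐ t ∂(volume : Measure ℝ), P {ω | ε ω = -c - t} = 0 := by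
        rw [MeasureTheory.ae_iff]
        simpa using hnull
      filter_upwards [this] with t ht
      congr 1
      refine le_antisymm ?_ (measure_mono fun ω hω => ⟨hω.1.le, hω.2⟩)
      have hsub : {ω | -c ≤ ε ω + t ∧ ε ω + t < c}
          ⊆ {ω | -c < ε ω + t ∧ ε ω + t < c} ∪ {ω | ε ω = -c - t} := by
        intro ω hω
        rcases lt_or_eq_of_le hω.1 with h | h
        · exact Or.inl ⟨h, hω.2⟩
        · exact Or.inr (by simp only [Set.mem_setOf_eq]; linarith)
      calc P {ω | -c ≤ ε ω + t ∧ ε ω + t < c}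
          ≤ P ({ω | -c < ε ω + t ∧ ε ω + t < c} ∪ {ω | ε ω = -c - t}) := measure_mono hsub
        _ ≤ P {ω | -c < ε ω + t ∧ ε ω + t < c} + P {ω | ε ω = -c - t} := measure_union_le _ _
        _ = P {ω | -c < ε ω + t ∧ ε ω + t < c} := by rw [ht, add_zero]
    exact integral_congr_ae hae
  rcases le_total 0 x with hx | hx
  · simp_rw [intervalIntegral.integral_of_le hx]
    exact main 0 x
  · simp_rw [intervalIntegral.integral_of_ge hx, integral_neg]
    rw [main x 0]
end

section
/- Let ε be a real random variable whose law has a Lebesgue density f (a nonnegative measurable function with P(ε ∈ B) = ∫_B f(t) dt for every Borel set B ⊆ ℝ), and suppose f is Lipschitz with constant L on the interval [−δ, δ], where δ, L > 0. Then: (i) for every τ ∈ (0,1) and every x ∈ ℝ, E[ψ_τ(ε + x) − ψ_τ(ε)] = P(ε < 0) − P(ε < −x); and (ii) for every x with |x| ≤ δ, |P(ε < 0) − P(ε < −x) − f(0)·x| ≤ L·x²/2. -/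
open MeasureTheory

/-- let `ε` have a Lebesgue density `f` which is Lipschitz with constant `L`
on `[−δ, δ]` (`δ, L > 0`). Then (i) for every `τ ∈ (0,1)` and every `x`,
`E[ψ_τ(ε + x) − ψ_τ(ε)] = P(ε < 0) − P(ε < −x)`; and (ii) for every `|x| ≤ δ`,
`|P(ε < 0) − P(ε < −x) − f(0)·x| ≤ L·x²/2`. -/
theorem stmt_8 {Ω : Type*} [MeasurableSpace Ω] (P : Measure Ω) [IsProbabilityMeasure P]
    (ε : Ω → ℝ) (hε : Measurable ε)
    (f : ℝ → ℝ) (hfmeas : Measurable f) (hfpos : ∀ t, 0 ≤ f t)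
    (hdensity : ∀ B : Set ℝ, MeasurableSet B →
      P (ε ⁻¹' B) = ∫⁻ t in B, ENNReal.ofReal (f t) ∂volume)
    (δ L : ℝ) (hδ : 0 < δ) (hL : 0 < L)
    (hLip : LipschitzOnWith (Real.toNNReal L) f (Set.Icc (-δ) δ)) :
    (∀ τ ∈ Set.Ioo (0 : ℝ) 1, ∀ x : ℝ,
      ∫ ω, (quantileScore τ (ε ω + x) - quantileScore τ (ε ω)) ∂P
        = (P {ω | ε ω < 0}).toReal - (P {ω | ε ω < -x}).toReal) ∧
    (∀ x : ℝ, |x| ≤ δ →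
      |(P {ω | ε ω < 0}).toReal - (P {ω | ε ω < -x}).toReal - f 0 * x|
        ≤ L * x ^ 2 / 2) := by
  -- total mass of f is 1
  have htotal : ∫⁻ t, ENNReal.ofReal (f t) ∂volume = 1 := by
    have h := hdensity Set.univ MeasurableSet.univ
    rw [Set.preimage_univ, measure_univ] at h
    simpa [Measure.restrict_univ] using h.symm
  -- f is integrable
  have hfint : Integrable f volume := by
    refine ⟨hfmeas.aestronglyMeasurable, ?_⟩
    rw [hasFiniteIntegral_iff_ofReal (Filter.Eventually.of_forall hfpos)]
    rw [htotal]; exact ENNReal.one_lt_top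
  -- probability of a lower level set as integral of density over Iio
  have hPa : ∀ a : ℝ, (P {ω | ε ω < a}).toReal = ∫ t in Set.Iio a, f t := by
    intro a
    have h1 : {ω | ε ω < a} = ε ⁻¹' Set.Iio a := rfl
    rw [h1, hdensity _ measurableSet_Iio,
      integral_eq_lintegral_of_nonneg_ae (Filter.Eventually.of_forall hfpos)
        hfmeas.aestronglyMeasurable.restrict]
  constructor
  · -- Part (i)
    intro τ hτ x
    have hA : MeasurableSet {ω | ε ω < 0} := hε measurableSet_Iio
    have hB : MeasurableSet {ω | ε ω < -x} := hε measurableSet_Iio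
    have hAint : Integrable ({ω | ε ω < 0}.indicator (fun _ => (1:ℝ))) P :=
      (integrable_const (1:ℝ)).indicator hA
    have hBint : Integrable ({ω | ε ω < -x}.indicator (fun _ => (1:ℝ))) P :=
      (integrable_const (1:ℝ)).indicator hB
    have heq : ∀ ω, quantileScore τ (ε ω + x) - quantileScore τ (ε ω)
        = {ω | ε ω < 0}.indicator (fun _ => (1:ℝ)) ω
          - {ω | ε ω < -x}.indicator (fun _ => (1:ℝ)) ω := by
      intro ω
      have hiff : (ε ω + x < 0) ↔ (ε ω < -x) := by constructor <;> intro <;> linarith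
      simp only [quantileScore, Set.indicator, Set.mem_setOf_eq, hiff]
      by_cases h1 : ε ω < 0 <;> by_cases h2 : ε ω < -x <;> simp [h1, h2]
    calc ∫ ω, (quantileScore τ (ε ω + x) - quantileScore τ (ε ω)) ∂P
        = ∫ ω, ({ω | ε ω < 0}.indicator (fun _ => (1:ℝ)) ω
            - {ω | ε ω < -x}.indicator (fun _ => (1:ℝ)) ω) ∂P := by
          exact integral_congr_ae (Filter.Eventually.of_forall heq)
      _ = (P {ω | ε ω < 0}).toReal - (P {ω | ε ω < -x}).toReal := by
          rw [integral_sub hAint hBint]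
          have h1 : ∫ ω, {ω | ε ω < 0}.indicator (fun _ => (1:ℝ)) ω ∂P
              = (P {ω | ε ω < 0}).toReal := integral_indicator_one hA
          have h2 : ∫ ω, {ω | ε ω < -x}.indicator (fun _ => (1:ℝ)) ω ∂P
              = (P {ω | ε ω < -x}).toReal := integral_indicator_one hB
          rw [h1, h2]
  · -- Part (ii)
    intro x hx
    obtain ⟨hx1, hx2⟩ := abs_le.mp hx
    have h0d : (0:ℝ) ∈ Set.Icc (-δ) δ := ⟨by linarith, hδ.le⟩
    have hII : IntervalIntegrable f volume (-x) 0 := hfint.intervalIntegrable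
    have key : (P {ω | ε ω < 0}).toReal - (P {ω | ε ω < -x}).toReal
        = ∫ t in (-x)..(0:ℝ), f t := by
      rw [hPa, hPa,
        setIntegral_congr_set (Iio_ae_eq_Iic (a := (0:ℝ))),
        setIntegral_congr_set (Iio_ae_eq_Iic (a := (-x))),
        intervalIntegral.integral_Iic_sub_Iic hfint.integrableOn hfint.integrableOn]
    rw [key]
    have hsub : (∫ t in (-x)..(0:ℝ), f t) - f 0 * x
        = ∫ t in (-x)..(0:ℝ), (f t - f 0) := by
      rw [intervalIntegral.integral_sub hII intervalIntegrable_const,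
        intervalIntegral.integral_const]
      simp; ring
    rw [hsub]
    have hbound : ∀ᵐ t ∂(volume.restrict (Set.uIoc (-x) (0:ℝ))),
        ‖f t - f 0‖ ≤ L * |t| := by
      refine (ae_restrict_iff' measurableSet_uIoc).mpr (Filter.Eventually.of_forall ?_)
      intro t ht
      have htmem : t ∈ Set.Icc (-δ) δ := by
        rcases ht with ⟨h1, h2⟩
        constructor
        · have : -δ ≤ min (-x) 0 := le_min (by linarith) (by linarith)
          linarith [this.trans_lt h1]
        · have : max (-x) 0 ≤ δ := max_le (by linarith) hδ.le
          linarith [h2.trans this]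
      have hd := hLip.dist_le_mul t htmem 0 h0d
      rw [Real.dist_eq, Real.dist_eq, sub_zero, Real.coe_toNNReal L hL.le] at hd
      simpa using hd
    have hgII : IntervalIntegrable (fun t => L * |t|) volume (-x) 0 :=
      (continuous_const.mul continuous_abs).intervalIntegrable _ _
    have hnorm := intervalIntegral.norm_integral_le_abs_of_norm_le hbound hgII
    have hgval : abs (∫ t in (-x)..(0:ℝ), L * |t|) = L * x ^ 2 / 2 := by
      rcases le_or_gt 0 x with hx0 | hx0
      · have hcong : Set.EqOn (fun t => L * |t|) (fun t => L * (-t))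
            (Set.uIcc (-x) 0) := by
          intro t ht
          rw [Set.uIcc_of_le (by linarith)] at ht
          simp [abs_of_nonpos ht.2]
        rw [intervalIntegral.integral_congr hcong]
        have : ∫ t in (-x)..(0:ℝ), L * (-t) = L * x ^ 2 / 2 := by
          have h1 : ∫ t in (-x)..(0:ℝ), L * t = -(L * x ^ 2 / 2) := by
            rw [intervalIntegral.integral_const_mul, integral_id]; ring
          calc ∫ t in (-x)..(0:ℝ), L * (-t) = -∫ t in (-x)..(0:ℝ), L * t := by
                simp only [mul_neg, intervalIntegral.integral_neg]
            _ = L * x ^ 2 / 2 := by rw [h1]; ring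
        rw [this, abs_of_nonneg (by positivity)]
      · have hcong : Set.EqOn (fun t => L * |t|) (fun t => L * t)
            (Set.uIcc (-x) 0) := by
          intro t ht
          rw [Set.uIcc_of_ge (by linarith)] at ht
          simp [abs_of_nonneg ht.1]
        rw [intervalIntegral.integral_congr hcong]
        have : ∫ t in (-x)..(0:ℝ), L * t = -(L * x ^ 2 / 2) := by
          rw [intervalIntegral.integral_const_mul, integral_id]; ring
        rw [this, abs_neg, abs_of_nonneg (by positivity)]
    calc |∫ t in (-x)..(0:ℝ), (f t - f 0)| ≤ abs (∫ t in (-x)..(0:ℝ), L * |t|) := hnorm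
      _ = L * x ^ 2 / 2 := hgval
end

section
/- Let 1 < q < 2. There exists a constant C_q > 0 such that for all real ε and u: (i) if |ε| > 2|u| then |ψ_q(ε + u) − ψ_q(ε − u)| ≤ C_q·|u|·|ε|^{q−2}; (ii) if |ε| ≤ 2|u| then |ψ_q(ε + u) − ψ_q(ε − u)| ≤ C_q·|u|^{q−1}. -/
/-- The `L_q` score `ψ_q(v) = q·|v|^{q−1}·sign(v)` (with `ψ_q(0) = 0`). -/
noncomputable def lqScore (q v : ℝ) : ℝ := q * |v| ^ (q - 1) * Real.sign v

lemma rpow_sub_rpow_le (p : ℝ) (hp0 : 0 < p) (hp1 : p ≤ 1) {a b : ℝ} (hb : 0 < b)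
    (hba : b ≤ a) : a ^ p - b ^ p ≤ p * b ^ (p - 1) * (a - b) := by
  have hs : (0:ℝ) ≤ (a - b) / b := div_nonneg (by linarith) hb.le
  have key : (1 + (a - b) / b) ^ p ≤ 1 + p * ((a - b) / b) :=
    rpow_one_add_le_one_add_mul_self (by linarith) hp0.le hp1
  have ha : b * (1 + (a - b) / b) = a := by field_simp; ring
  have h3 : b ^ p * (1 + (a - b) / b) ^ p ≤ b ^ p * (1 + p * ((a - b) / b)) :=
    mul_le_mul_of_nonneg_left key (Real.rpow_nonneg hb.le p)
  have h4 : b ^ (p - 1) = b ^ p / b := by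
    rw [Real.rpow_sub hb, Real.rpow_one]
  have h5 : a ^ p ≤ b ^ p + p * b ^ (p - 1) * (a - b) := by
    calc a ^ p = b ^ p * (1 + (a - b) / b) ^ p := by
          rw [← Real.mul_rpow hb.le (by linarith), ha]
      _ ≤ b ^ p * (1 + p * ((a - b) / b)) := h3
      _ = b ^ p + p * (b ^ p / b) * (a - b) := by field_simp
      _ = b ^ p + p * b ^ (p - 1) * (a - b) := by rw [h4]
  linarith

lemma abs_rpow_sub_rpow_le (p : ℝ) (hp0 : 0 < p) (hp1 : p ≤ 1) {a b m : ℝ} (hm : 0 < m)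
    (hma : m ≤ a) (hmb : m ≤ b) : |a ^ p - b ^ p| ≤ p * m ^ (p - 1) * |a - b| := by
  have ha : 0 < a := hm.trans_le hma
  have hb : 0 < b := hm.trans_le hmb
  have hmono : ∀ x : ℝ, m ≤ x → x ^ (p - 1) ≤ m ^ (p - 1) := fun x hx =>
    Real.rpow_le_rpow_of_nonpos hm hx (by linarith)
  rcases le_total b a with h | h
  · rw [abs_of_nonneg (by linarith : (0:ℝ) ≤ a - b),
      abs_of_nonneg (sub_nonneg.mpr (Real.rpow_le_rpow hb.le h hp0.le))]
    calc a ^ p - b ^ p ≤ p * b ^ (p - 1) * (a - b) := rpow_sub_rpow_le p hp0 hp1 hb h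
      _ ≤ p * m ^ (p - 1) * (a - b) := by
          apply mul_le_mul_of_nonneg_right _ (by linarith)
          exact mul_le_mul_of_nonneg_left (hmono b hmb) hp0.le
  · rw [abs_sub_comm, abs_sub_comm a b,
      abs_of_nonneg (by linarith : (0:ℝ) ≤ b - a),
      abs_of_nonneg (sub_nonneg.mpr (Real.rpow_le_rpow ha.le h hp0.le))]
    calc b ^ p - a ^ p ≤ p * a ^ (p - 1) * (b - a) := rpow_sub_rpow_le p hp0 hp1 ha h
      _ ≤ p * m ^ (p - 1) * (b - a) := by
          apply mul_le_mul_of_nonneg_right _ (by linarith)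
          exact mul_le_mul_of_nonneg_left (hmono a hma) hp0.le

lemma lqScore_abs_le (q : ℝ) (hq1 : 1 < q) (v : ℝ) : |lqScore q v| ≤ q * |v| ^ (q - 1) := by
  unfold lqScore
  rw [abs_mul, abs_mul, abs_of_nonneg (by linarith : (0:ℝ) ≤ q),
    abs_of_nonneg (Real.rpow_nonneg (abs_nonneg v) _)]
  have : |Real.sign v| ≤ 1 := by
    rcases Real.sign_apply_eq v with h | h | h <;> simp [h]
  exact mul_le_of_le_one_right
    (mul_nonneg (by linarith) (Real.rpow_nonneg (abs_nonneg v) _)) this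

lemma lqScore_of_pos (q v : ℝ) (hv : 0 < v) : lqScore q v = q * v ^ (q - 1) := by
  unfold lqScore
  rw [Real.sign_of_pos hv, abs_of_pos hv, mul_one]

/-- for `1 < q < 2` there exists `C_q > 0` such that for all real `ε, u`:
(i) if `|ε| > 2|u|` then `|ψ_q(ε + u) − ψ_q(ε − u)| ≤ C_q·|u|·|ε|^{q−2}`;
(ii) if `|ε| ≤ 2|u|` then `|ψ_q(ε + u) − ψ_q(ε − u)| ≤ C_q·|u|^{q−1}`. -/
theorem stmt_11 (q : ℝ) (hq1 : 1 < q) (hq2 : q < 2) :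
    ∃ C : ℝ, 0 < C ∧ ∀ ε u : ℝ,
      (2 * |u| < |ε| →
        |lqScore q (ε + u) - lqScore q (ε - u)| ≤ C * |u| * |ε| ^ (q - 2)) ∧
      (|ε| ≤ 2 * |u| →
        |lqScore q (ε + u) - lqScore q (ε - u)| ≤ C * |u| ^ (q - 1)) := by
  have hq0 : (0:ℝ) < q := by linarith
  refine ⟨8 * q, by linarith, ?_⟩
  have hfar : ∀ ε u : ℝ, 0 < ε → 2 * |u| < ε →
      |lqScore q (ε + u) - lqScore q (ε - u)| ≤ 8 * q * |u| * ε ^ (q - 2) := by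
    intro ε u hε h
    have hu := abs_nonneg u
    have hu1 : u ≤ |u| := le_abs_self u
    have hu2 : -|u| ≤ u := neg_abs_le u
    have hεu1 : 0 < ε + u := by linarith
    have hεu2 : 0 < ε - u := by linarith
    have hm : (0:ℝ) < ε / 2 := by linarith
    rw [lqScore_of_pos q _ hεu1, lqScore_of_pos q _ hεu2, ← mul_sub, abs_mul,
      abs_of_nonneg hq0.le]
    have hkey : |(ε + u) ^ (q - 1) - (ε - u) ^ (q - 1)| ≤
        (q - 1) * (ε / 2) ^ (q - 1 - 1) * |(ε + u) - (ε - u)| :=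
      abs_rpow_sub_rpow_le (q - 1) (by linarith) (by linarith) hm (by linarith) (by linarith)
    have habs : |(ε + u) - (ε - u)| = 2 * |u| := by
      rw [show (ε + u) - (ε - u) = 2 * u by ring, abs_mul]; norm_num
    have hhalf : (ε / 2) ^ (q - 1 - 1) ≤ 2 * ε ^ (q - 2) := by
      have h1 : (ε / 2) ^ (q - 2) = ε ^ (q - 2) / 2 ^ (q - 2) := Real.div_rpow hε.le (by norm_num) _
      have h2 : (2:ℝ) ^ (q - 2) = (2 ^ (2 - q))⁻¹ := by
        rw [← Real.rpow_neg (by norm_num)]; ring_nf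
      have h3 : (2:ℝ) ^ (2 - q) ≤ 2 := by
        calc (2:ℝ) ^ (2 - q) ≤ 2 ^ (1:ℝ) :=
              Real.rpow_le_rpow_of_exponent_le (by norm_num) (by linarith)
          _ = 2 := Real.rpow_one 2
      have h4 : (0:ℝ) < 2 ^ (2 - q) := Real.rpow_pos_of_pos (by norm_num) _
      have h5 : ε ^ (q - 2) / 2 ^ (q - 2) = ε ^ (q - 2) * 2 ^ (2 - q) := by
        rw [h2]; field_simp
      have h6 : (0:ℝ) ≤ ε ^ (q - 2) := Real.rpow_nonneg hε.le _
      have : ε ^ (q - 2) * 2 ^ (2 - q) ≤ ε ^ (q - 2) * 2 :=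
        mul_le_mul_of_nonneg_left h3 h6
      rw [show q - 1 - 1 = q - 2 by ring, h1, h5]; linarith
    have h6 : (0:ℝ) ≤ ε ^ (q - 2) := Real.rpow_nonneg hε.le _
    calc q * |(ε + u) ^ (q - 1) - (ε - u) ^ (q - 1)|
        ≤ q * ((q - 1) * (ε / 2) ^ (q - 1 - 1) * (2 * |u|)) := by
          rw [← habs]; exact mul_le_mul_of_nonneg_left hkey hq0.le
      _ ≤ q * ((q - 1) * (2 * ε ^ (q - 2)) * (2 * |u|)) := by
          apply mul_le_mul_of_nonneg_left _ hq0.le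
          apply mul_le_mul_of_nonneg_right _ (by linarith)
          exact mul_le_mul_of_nonneg_left hhalf (by linarith)
      _ = 4 * q * (q - 1) * |u| * ε ^ (q - 2) := by ring
      _ ≤ 8 * q * |u| * ε ^ (q - 2) := by
          nlinarith [mul_nonneg (mul_nonneg hq0.le hu) h6]
  have hodd : ∀ v : ℝ, lqScore q (-v) = - lqScore q v := by
    intro v; unfold lqScore; rw [abs_neg, Real.sign_neg]; ring
  intro ε u
  constructor
  · intro h
    rcases lt_trichotomy ε 0 with hε | hε | hε
    · have h2 : 2 * |(-u)| < -ε := by rw [abs_neg]; rw [abs_of_neg hε] at h; linarith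
      have := hfar (-ε) (-u) (by linarith) h2
      rw [show -ε + -u = -(ε + u) by ring, show -ε - -u = -(ε - u) by ring,
        hodd, hodd,
        show -lqScore q (ε + u) - -lqScore q (ε - u)
          = -(lqScore q (ε + u) - lqScore q (ε - u)) by ring,
        abs_neg, abs_neg] at this
      rwa [abs_of_neg hε]
    · exfalso; rw [hε, abs_zero] at h; nlinarith [abs_nonneg u]
    · have h2 : 2 * |u| < ε := by rwa [abs_of_pos hε] at h
      have := hfar ε u hε h2
      rwa [abs_of_pos hε]
  · intro h
    have hu := abs_nonneg u
    have h1 : |ε + u| ≤ 3 * |u| := by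
      calc |ε + u| ≤ |ε| + |u| := abs_add_le ε u
        _ ≤ 3 * |u| := by linarith
    have h2 : |ε - u| ≤ 3 * |u| := by
      calc |ε - u| ≤ |ε| + |u| := abs_sub ε u
        _ ≤ 3 * |u| := by linarith
    have hb : ∀ v : ℝ, |v| ≤ 3 * |u| → |lqScore q v| ≤ 3 * q * |u| ^ (q - 1) := by
      intro v hv
      calc |lqScore q v| ≤ q * |v| ^ (q - 1) := lqScore_abs_le q hq1 v
        _ ≤ q * (3 * |u|) ^ (q - 1) := by
            apply mul_le_mul_of_nonneg_left _ hq0.le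
            exact Real.rpow_le_rpow (abs_nonneg v) hv (by linarith)
        _ = q * (3 ^ (q - 1) * |u| ^ (q - 1)) := by
            rw [Real.mul_rpow (by norm_num) (abs_nonneg u)]
        _ ≤ q * (3 * |u| ^ (q - 1)) := by
            apply mul_le_mul_of_nonneg_left _ hq0.le
            apply mul_le_mul_of_nonneg_right _ (Real.rpow_nonneg (abs_nonneg u) _)
            calc (3:ℝ) ^ (q - 1) ≤ 3 ^ (1:ℝ) :=
                Real.rpow_le_rpow_of_exponent_le (by norm_num) (by linarith)
              _ = 3 := Real.rpow_one 3
        _ = 3 * q * |u| ^ (q - 1) := by ring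
    calc |lqScore q (ε + u) - lqScore q (ε - u)|
        ≤ |lqScore q (ε + u)| + |lqScore q (ε - u)| := abs_sub _ _
      _ ≤ 3 * q * |u| ^ (q - 1) + 3 * q * |u| ^ (q - 1) := add_le_add (hb _ h1) (hb _ h2)
      _ ≤ 8 * q * |u| ^ (q - 1) := by
          nlinarith [Real.rpow_nonneg (abs_nonneg u) (q - 1)]
end

section
/- Let (Ω, 𝔉, P) be a probability space, let S₀, S, S_T be measurable spaces, and let W : Ω → S₀, ζ : Ω → S, ζ′ : Ω → S, V : Ω → S_T be random elements such that W, ζ, ζ′, V are jointly (mutually) independent and ζ′ has the same distribution as ζ. Let q ∈ [1, ∞) and let f : S₀ × S × S_T → ℝ be measurable with E|f(W, ζ, V)|^q < ∞. Then ‖E[f(W,ζ,V) | σ(ζ,V)] − E[f(W,ζ,V) | σ(V)]‖_{L^q(P)} ≤ ‖f(W,ζ,V) − f(W,ζ′,V)‖_{L^q(P)}, where σ(ζ,V) and σ(V) denote the σ-algebras generated by the pair (ζ, V) and by V respectively, and E[· | ·] denotes conditional expectation. -/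
open MeasureTheory

open Filter

lemma tangent_le_abs_rpow {q : ℝ} (hq : 1 ≤ q) {r : ℝ} (hr : 0 < r) (x : ℝ) :
    r ^ q + q * r ^ (q - 1) * (x - r) ≤ |x| ^ q := by
  have hq0 : (0:ℝ) < q := lt_of_lt_of_le one_pos hq
  have hslope : 0 ≤ q * r ^ (q - 1) := mul_nonneg hq0.le (Real.rpow_nonneg hr.le _)
  have key : ∀ a : ℝ, 0 ≤ a → r ^ q + q * r ^ (q - 1) * (a - r) ≤ a ^ q := by
    intro a ha
    have hs : (-1:ℝ) ≤ a / r - 1 := by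
      have : 0 ≤ a / r := div_nonneg ha hr.le
      linarith
    have hB := one_add_mul_self_le_rpow_one_add hs hq
    have h1 : (1:ℝ) + (a / r - 1) = a / r := by ring
    rw [h1, Real.div_rpow ha hr.le] at hB
    have hrq : (0:ℝ) < r ^ q := Real.rpow_pos_of_pos hr q
    have hmul : (1 + q * (a / r - 1)) * r ^ q ≤ a ^ q := (le_div_iff₀ hrq).mp hB
    have heq : (1 + q * (a / r - 1)) * r ^ q = r ^ q + q * r ^ (q - 1) * (a - r) := by
      rw [Real.rpow_sub_one hr.ne' q]
      field_simp
    linarith [heq ▸ hmul]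
  calc r ^ q + q * r ^ (q - 1) * (x - r)
      ≤ r ^ q + q * r ^ (q - 1) * (|x| - r) := by
        have := mul_le_mul_of_nonneg_left (sub_le_sub_right (le_abs_self x) r) hslope
        linarith
    _ ≤ |x| ^ q := key _ (abs_nonneg x)

lemma abs_rpow_le_of_forall_tangent {q : ℝ} (hq : 1 ≤ q) {b y : ℝ} (hb : 0 ≤ b)
    (h : ∀ r : ℚ, b < (r:ℝ) → (r:ℝ) ^ q + q * (r:ℝ) ^ (q - 1) * (b - (r:ℝ)) ≤ y) :
    b ^ q ≤ y := by
  have hex : ∀ n : ℕ, ∃ r : ℚ, b < (r:ℝ) ∧ (r:ℝ) < b + 1/(n+1) := by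
    intro n
    have : (0:ℝ) < 1/(n+1) := by positivity
    exact exists_rat_btwn (by linarith)
  choose r hr1 hr2 using hex
  have htend : Tendsto (fun n : ℕ => (r n : ℝ)) atTop (nhds b) := by
    have hupper : Tendsto (fun n : ℕ => b + 1/(n+1 : ℝ)) atTop (nhds b) := by
      have := tendsto_one_div_add_atTop_nhds_zero_nat (𝕜 := ℝ)
      simpa using tendsto_const_nhds.add this
    exact tendsto_of_tendsto_of_tendsto_of_le_of_le tendsto_const_nhds hupper
      (fun n => (hr1 n).le) (fun n => (hr2 n).le)
  have hc1 : Tendsto (fun n : ℕ => (r n : ℝ) ^ q) atTop (nhds (b ^ q)) :=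
    ((Real.continuousAt_rpow_const b q (Or.inr (by linarith))).tendsto.comp htend)
  have hc2 : Tendsto (fun n : ℕ => (r n : ℝ) ^ (q-1)) atTop (nhds (b ^ (q-1))) :=
    ((Real.continuousAt_rpow_const b (q-1) (Or.inr (by linarith))).tendsto.comp htend)
  have hc3 : Tendsto (fun n : ℕ => b - (r n : ℝ)) atTop (nhds 0) := by
    have := (tendsto_const_nhds (x := b)).sub htend
    simpa using this
  have hu : Tendsto (fun n : ℕ => (r n:ℝ)^q + q*(r n:ℝ)^(q-1)*(b - (r n:ℝ))) atTop
      (nhds (b^q)) := by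
    have := hc1.add (((tendsto_const_nhds (x := q)).mul hc2).mul hc3)
    simpa using this
  exact le_of_tendsto hu (Eventually.of_forall fun n => h (r n) (hr1 n))

lemma eLpNorm_condExp_le_self {Ω : Type*} {m m0 : MeasurableSpace Ω} (P : Measure Ω)
    [IsProbabilityMeasure P] (hm : m ≤ m0) {q : ℝ} (hq : 1 ≤ q) {G : Ω → ℝ}
    (hG : MemLp G (ENNReal.ofReal q) P) :
    eLpNorm (condExp m P G) (ENNReal.ofReal q) P ≤ eLpNorm G (ENNReal.ofReal q) P := by
  have hq0 : (0:ℝ) < q := by linarith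
  set p := ENNReal.ofReal q with hpdef
  have hpt : p.toReal = q := ENNReal.toReal_ofReal hq0.le
  have hp0 : p ≠ 0 := by
    simp only [hpdef, ne_eq, ENNReal.ofReal_eq_zero, not_le]
    exact hq0
  have hp_top : p ≠ ⊤ := ENNReal.ofReal_ne_top
  have hp1 : 1 ≤ p := by
    rw [hpdef, ← ENNReal.ofReal_one]
    exact ENNReal.ofReal_le_ofReal hq
  have hGint : Integrable G P := hG.integrable hp1
  set φG : Ω → ℝ := fun ω => |G ω| ^ q with hφG
  have hφGint : Integrable φG P := by
    have := hG.integrable_norm_rpow hp0 hp_top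
    simpa [hpt, Real.norm_eq_abs] using this
  set A := condExp m P G with hA
  set Y := condExp m P φG with hY
  have hYint : Integrable Y P := integrable_condExp
  -- affine transform of condExp
  have haffine : ∀ c₀ c₁ : ℝ, condExp m P (fun ω => c₀ + c₁ * G ω)
      =ᵐ[P] fun ω => c₀ + c₁ * A ω := by
    intro c₀ c₁
    have h1 : (fun ω => c₀ + c₁ * G ω) = (fun _ : Ω => c₀) + c₁ • G := by
      funext ω; simp [smul_eq_mul]
    rw [h1]
    have h2 := condExp_add (m := m) (μ := P) (integrable_const c₀) (hGint.smul c₁)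
    have h3 := condExp_smul (m := m) (μ := P) c₁ G
    have h4 : condExp m P (fun _ : Ω => c₀) = fun _ => c₀ := condExp_const hm c₀
    filter_upwards [h2, h3] with ω h2 h3
    simp only [Pi.add_apply, Pi.smul_apply, smul_eq_mul] at *
    rw [h2, h3, h4]
  have hgen : ∀ c₀ c₁ : ℝ, (∀ x : ℝ, c₀ + c₁ * x ≤ |x| ^ q) →
      (fun ω => c₀ + c₁ * A ω) ≤ᵐ[P] Y := by
    intro c₀ c₁ hpt'
    have hint : Integrable (fun ω => c₀ + c₁ * G ω) P := by
      have : Integrable ((fun _ : Ω => c₀) + c₁ • G) P := (integrable_const c₀).add (hGint.smul c₁)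
      exact this
    have hmono := condExp_mono (m := m) hint hφGint
      (Eventually.of_forall fun ω => hpt' (G ω))
    filter_upwards [hmono, haffine c₀ c₁] with ω h1 h2
    rw [← h2]; exact h1
  have hall : ∀ᵐ ω ∂P, ∀ r : ℚ, 0 < (r:ℝ) →
      ((r:ℝ)^q + q*(r:ℝ)^(q-1)*(A ω - (r:ℝ)) ≤ Y ω ∧
       (r:ℝ)^q + q*(r:ℝ)^(q-1)*(-A ω - (r:ℝ)) ≤ Y ω) := by
    rw [ae_all_iff]
    intro r
    by_cases hr : 0 < (r:ℝ)
    · have hplus := hgen ((r:ℝ)^q - q*(r:ℝ)^(q-1)*(r:ℝ)) (q*(r:ℝ)^(q-1)) (fun x => by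
        have := tangent_le_abs_rpow hq hr x; linarith)
      have hminus := hgen ((r:ℝ)^q - q*(r:ℝ)^(q-1)*(r:ℝ)) (-(q*(r:ℝ)^(q-1))) (fun x => by
        have := tangent_le_abs_rpow hq hr (-x)
        rw [abs_neg] at this; linarith)
      filter_upwards [hplus, hminus] with ω h1 h2
      intro _
      constructor <;> [skip; skip] <;> nlinarith [h1, h2]
    · exact Eventually.of_forall fun ω h => absurd h hr
  have hkey : ∀ᵐ ω ∂P, |A ω| ^ q ≤ Y ω := by
    filter_upwards [hall] with ω hω
    apply abs_rpow_le_of_forall_tangent hq (abs_nonneg (A ω))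
    intro r hr
    have hr0 : 0 < (r:ℝ) := lt_of_le_of_lt (abs_nonneg _) hr
    rcases le_total 0 (A ω) with h | h
    · have := (hω r hr0).1
      rwa [abs_of_nonneg h]
    · have := (hω r hr0).2
      rw [abs_of_nonpos h]
      linarith [this]
  -- now the norm chain
  have hYnn : 0 ≤ᵐ[P] Y :=
    condExp_nonneg (Eventually.of_forall fun ω => Real.rpow_nonneg (abs_nonneg _) _)
  have habs : ∀ (u : Ω → ℝ) (ω : Ω), ((‖u ω‖₊ : ENNReal)) ^ q = ENNReal.ofReal (|u ω| ^ q) := by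
    intro u ω
    rw [← enorm_eq_nnnorm, ← ofReal_norm, Real.norm_eq_abs,
      ← ENNReal.ofReal_rpow_of_nonneg (abs_nonneg _) hq0.le]
  have hle : (∫⁻ ω, ((‖A ω‖₊ : ENNReal)) ^ q ∂P) ≤ ∫⁻ ω, ((‖G ω‖₊ : ENNReal)) ^ q ∂P := by
    have h1 : (∫⁻ ω, ((‖A ω‖₊ : ENNReal)) ^ q ∂P) ≤ ∫⁻ ω, ENNReal.ofReal (Y ω) ∂P := by
      refine lintegral_mono_ae ?_
      filter_upwards [hkey] with ω hω
      rw [habs A ω]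
      exact ENNReal.ofReal_le_ofReal hω
    have h2 : (∫⁻ ω, ENNReal.ofReal (Y ω) ∂P) = ENNReal.ofReal (∫ ω, Y ω ∂P) :=
      (ofReal_integral_eq_lintegral_ofReal hYint hYnn).symm
    have h3 : (∫ ω, Y ω ∂P) = ∫ ω, φG ω ∂P := integral_condExp hm
    have h4 : ENNReal.ofReal (∫ ω, φG ω ∂P) = ∫⁻ ω, ENNReal.ofReal (φG ω) ∂P :=
      ofReal_integral_eq_lintegral_ofReal hφGint
        (Eventually.of_forall fun ω => Real.rpow_nonneg (abs_nonneg _) _)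
    have h5 : (∫⁻ ω, ENNReal.ofReal (φG ω) ∂P) = ∫⁻ ω, ((‖G ω‖₊ : ENNReal)) ^ q ∂P := by
      refine lintegral_congr fun ω => ?_
      rw [habs G ω]
    rw [h2, h3, h4] at h1
    rwa [h5] at h1
  rw [eLpNorm_eq_lintegral_rpow_enorm_toReal hp0 hp_top, eLpNorm_eq_lintegral_rpow_enorm_toReal hp0 hp_top,
    hpt]
  exact ENNReal.rpow_le_rpow hle (by positivity)

lemma condExp_indep_integral {Ω α β : Type*} [MeasurableSpace Ω] [MeasurableSpace α]
    [MeasurableSpace β] (P : Measure Ω) [IsProbabilityMeasure P] {X : Ω → α} {Y : Ω → β}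
    (hX : Measurable X) (hY : Measurable Y)
    (hXY : P.map (fun ω => (X ω, Y ω)) = (P.map X).prod (P.map Y))
    {h : α × β → ℝ} (hh : Measurable h)
    (hint : Integrable (fun ω => h (X ω, Y ω)) P) :
    condExp (MeasurableSpace.comap Y inferInstance) P (fun ω => h (X ω, Y ω))
      =ᵐ[P] fun ω => ∫ x, h (x, Y ω) ∂(P.map X) := by
  haveI : IsProbabilityMeasure (P.map X) := Measure.isProbabilityMeasure_map hX.aemeasurable
  haveI : IsProbabilityMeasure (P.map Y) := Measure.isProbabilityMeasure_map hY.aemeasurable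
  have hm : MeasurableSpace.comap Y inferInstance ≤ _ := hY.comap_le
  haveI : SigmaFinite (P.trim hm) := by
    haveI : IsFiniteMeasure (P.trim hm) := by
      constructor
      rw [trim_measurableSet_eq hm MeasurableSet.univ]
      exact measure_lt_top P _
    infer_instance
  have hprod : Integrable h ((P.map X).prod (P.map Y)) := by
    rw [← hXY]
    exact (integrable_map_measure hh.aestronglyMeasurable
      (hX.prodMk hY).aemeasurable).mpr hint
  set H : β → ℝ := fun y => ∫ x, h (x, y) ∂(P.map X) with hH
  have hHsm : StronglyMeasurable H := hh.stronglyMeasurable.integral_prod_left'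
  have hHint : Integrable H (P.map Y) := hprod.integral_prod_right
  have hHYint : Integrable (fun ω => H (Y ω)) P :=
    (integrable_map_measure hHsm.aestronglyMeasurable hY.aemeasurable).mp hHint
  refine (ae_eq_condExp_of_forall_setIntegral_eq hm hint ?_ ?_ ?_).symm
  · intro s _ _
    exact hHYint.integrableOn
  · rintro s ⟨B, hB, rfl⟩ _
    have e1 : ∫ ω in Y ⁻¹' B, H (Y ω) ∂P = ∫ y in B, H y ∂(P.map Y) :=
      (setIntegral_map hB hHsm.aestronglyMeasurable hY.aemeasurable).symm
    have e2 : ∫ ω in Y ⁻¹' B, h (X ω, Y ω) ∂P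
        = ∫ p in Prod.snd ⁻¹' B, h p ∂((P.map X).prod (P.map Y)) := by
      rw [← hXY, setIntegral_map (measurable_snd hB) hh.aestronglyMeasurable
        (hX.prodMk hY).aemeasurable]
      rfl
    have e3 : (Prod.snd ⁻¹' B : Set (α × β)) = Set.univ ×ˢ B := by
      ext p; simp
    have e4 : ((P.map X).prod (P.map Y)).restrict (Set.univ ×ˢ B)
        = (P.map X).prod ((P.map Y).restrict B) := by
      rw [← Measure.prod_restrict, Measure.restrict_univ]
    have hres : Integrable h ((P.map X).prod ((P.map Y).restrict B)) := by
      rw [← e4]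
      exact hprod.restrict
    have e5 : ∫ p, h p ∂((P.map X).prod ((P.map Y).restrict B))
        = ∫ y in B, H y ∂(P.map Y) :=
      integral_prod_symm h hres
    rw [e1, e2, e3, ← e5]
    rw [show (∫ p in Set.univ ×ˢ B, h p ∂((P.map X).prod (P.map Y)))
        = ∫ p, h p ∂(((P.map X).prod (P.map Y)).restrict (Set.univ ×ˢ B)) from rfl, e4]
  · exact StronglyMeasurable.aestronglyMeasurable
      (hHsm.comp_measurable (measurable_iff_comap_le.mpr le_rfl))

/-- conditional-Jensen projection bound. Let `W, ζ, ζ′, V` be jointly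
independent random elements (expressed by the law of the quadruple being the product of
the marginal laws), with `ζ′` distributed as `ζ`. Let `q ∈ [1, ∞)` and
`f : S₀ × S × S_T → ℝ` measurable with `E|f(W,ζ,V)|^q < ∞`. Then
`‖E[f(W,ζ,V) | σ(ζ,V)] − E[f(W,ζ,V) | σ(V)]‖_{L^q} ≤ ‖f(W,ζ,V) − f(W,ζ′,V)‖_{L^q}`. -/
theorem stmt_19 {Ω : Type*} [MeasurableSpace Ω] (P : Measure Ω) [IsProbabilityMeasure P]
    {S₀ S ST : Type*} [MeasurableSpace S₀] [MeasurableSpace S] [MeasurableSpace ST]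
    (W : Ω → S₀) (ζ ζ' : Ω → S) (V : Ω → ST)
    (hW : Measurable W) (hζ : Measurable ζ) (hζ' : Measurable ζ') (hV : Measurable V)
    (hindep : P.map (fun ω => (W ω, ζ ω, ζ' ω, V ω))
      = (P.map W).prod ((P.map ζ).prod ((P.map ζ').prod (P.map V))))
    (hid : P.map ζ' = P.map ζ)
    (q : ℝ) (hq : 1 ≤ q)
    (f : S₀ × S × ST → ℝ) (hf : Measurable f)
    (hLq : MemLp (fun ω => f (W ω, ζ ω, V ω)) (ENNReal.ofReal q) P) :
    eLpNorm
        (MeasureTheory.condExp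
            (MeasurableSpace.comap (fun ω => (ζ ω, V ω)) inferInstance) P
            (fun ω => f (W ω, ζ ω, V ω))
          - MeasureTheory.condExp (MeasurableSpace.comap V inferInstance) P
            (fun ω => f (W ω, ζ ω, V ω)))
        (ENNReal.ofReal q) P
      ≤ eLpNorm (fun ω => f (W ω, ζ ω, V ω) - f (W ω, ζ' ω, V ω))
          (ENNReal.ofReal q) P := by
  have hp1 : 1 ≤ ENNReal.ofReal q := by
    rw [← ENNReal.ofReal_one]; exact ENNReal.ofReal_le_ofReal hq
  set μ0 := P.map W with hμ0
  set μ1 := P.map ζ with hμ1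
  set μ2 := P.map ζ' with hμ2
  set μ3 := P.map V with hμ3
  haveI : IsProbabilityMeasure μ0 := Measure.isProbabilityMeasure_map hW.aemeasurable
  haveI : IsProbabilityMeasure μ1 := Measure.isProbabilityMeasure_map hζ.aemeasurable
  haveI : IsProbabilityMeasure μ2 := Measure.isProbabilityMeasure_map hζ'.aemeasurable
  haveI : IsProbabilityMeasure μ3 := Measure.isProbabilityMeasure_map hV.aemeasurable
  have hquad : Measurable (fun ω => (W ω, ζ ω, ζ' ω, V ω)) :=
    hW.prodMk (hζ.prodMk (hζ'.prodMk hV))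
  -- M1 : law of (W, ζ)
  have hM1 : P.map (fun ω => (W ω, ζ ω)) = μ0.prod μ1 := by
    have hc : (fun ω => (W ω, ζ ω))
        = (Prod.map id (Prod.fst : S × S × ST → S)) ∘ (fun ω => (W ω, ζ ω, ζ' ω, V ω)) := rfl
    rw [hc, ← Measure.map_map (measurable_id.prodMap measurable_fst) hquad, hindep,
      ← Measure.map_prod_map _ _ measurable_id measurable_fst, Measure.map_id,
      Measure.map_fst_prod]
    simp
  -- M6 : law of (W, ζ', V)
  have hM6 : P.map (fun ω => (W ω, ζ' ω, V ω)) = μ0.prod (μ2.prod μ3) := by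
    have hc : (fun ω => (W ω, ζ' ω, V ω))
        = (Prod.map id (Prod.snd : S × S × ST → S × ST)) ∘ (fun ω => (W ω, ζ ω, ζ' ω, V ω)) := rfl
    rw [hc, ← Measure.map_map (measurable_id.prodMap measurable_snd) hquad, hindep,
      ← Measure.map_prod_map _ _ measurable_id measurable_snd, Measure.map_id,
      Measure.map_snd_prod]
    simp
  -- M7 : law of (W, ζ, V)
  have hM7 : P.map (fun ω => (W ω, ζ ω, V ω)) = μ0.prod (μ1.prod μ3) := by
    have hc : (fun ω => (W ω, ζ ω, V ω))
        = (Prod.map id (Prod.map id (Prod.snd : S × ST → ST)))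
          ∘ (fun ω => (W ω, ζ ω, ζ' ω, V ω)) := rfl
    rw [hc, ← Measure.map_map (measurable_id.prodMap (measurable_id.prodMap measurable_snd))
        hquad, hindep,
      ← Measure.map_prod_map _ _ measurable_id (measurable_id.prodMap measurable_snd),
      ← Measure.map_prod_map _ _ measurable_id measurable_snd, Measure.map_id, Measure.map_id,
      Measure.map_snd_prod]
    simp
  -- M2 : law of (W, ζ')
  have hM2 : P.map (fun ω => (W ω, ζ' ω)) = μ0.prod μ2 := by
    have hc : (fun ω => (W ω, ζ' ω))
        = (Prod.map id (Prod.fst : S × ST → S)) ∘ (fun ω => (W ω, ζ' ω, V ω)) := rfl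
    rw [hc, ← Measure.map_map (measurable_id.prodMap measurable_fst)
        (hW.prodMk (hζ'.prodMk hV)), hM6,
      ← Measure.map_prod_map _ _ measurable_id measurable_fst, Measure.map_id,
      Measure.map_fst_prod]
    simp
  -- M3 : law of (ζ, V)
  have hM3 : P.map (fun ω => (ζ ω, V ω)) = μ1.prod μ3 := by
    have hc : (fun ω => (ζ ω, V ω))
        = (Prod.map id (Prod.snd : S × ST → ST))
          ∘ ((Prod.snd : S₀ × S × S × ST → S × S × ST) ∘ (fun ω => (W ω, ζ ω, ζ' ω, V ω))) := rfl
    rw [hc, ← Measure.map_map (measurable_id.prodMap measurable_snd)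
        (measurable_snd.comp hquad),
      ← Measure.map_map measurable_snd hquad, hindep, Measure.map_snd_prod, measure_univ,
      one_smul, ← Measure.map_prod_map _ _ measurable_id measurable_snd, Measure.map_id,
      Measure.map_snd_prod]
    simp
  -- M4 : law of ((W, ζ), V)
  have hM4 : P.map (fun ω => ((W ω, ζ ω), V ω)) = (μ0.prod μ1).prod μ3 := by
    have hc : (fun ω => ((W ω, ζ ω), V ω))
        = (MeasurableEquiv.prodAssoc.symm : S₀ × S × ST ≃ᵐ (S₀ × S) × ST)
          ∘ (fun ω => (W ω, ζ ω, V ω)) := rfl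
    rw [hc, ← Measure.map_map MeasurableEquiv.prodAssoc.symm.measurable
        (hW.prodMk (hζ.prodMk hV)), hM7,
      ((measurePreserving_prodAssoc μ0 μ1 μ3).symm MeasurableEquiv.prodAssoc).map_eq]
  -- M5 : law of ((W, ζ'), (ζ, V))
  have hτmap : (μ1.prod (μ2.prod μ3)).map
      (fun t : S × S × ST => (t.2.1, (t.1, t.2.2))) = μ2.prod (μ1.prod μ3) := by
    have hc : (fun t : S × S × ST => (t.2.1, (t.1, t.2.2)))
        = (MeasurableEquiv.prodAssoc : (S × S) × ST ≃ᵐ S × S × ST)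
          ∘ ((Prod.map Prod.swap id)
          ∘ (MeasurableEquiv.prodAssoc.symm : S × S × ST ≃ᵐ (S × S) × ST)) := rfl
    rw [hc, ← Measure.map_map MeasurableEquiv.prodAssoc.measurable
        ((measurable_swap.prodMap measurable_id).comp
          MeasurableEquiv.prodAssoc.symm.measurable),
      ← Measure.map_map (measurable_swap.prodMap measurable_id)
        MeasurableEquiv.prodAssoc.symm.measurable,
      ((measurePreserving_prodAssoc μ1 μ2 μ3).symm MeasurableEquiv.prodAssoc).map_eq,
      ← Measure.map_prod_map _ _ measurable_swap measurable_id, Measure.prod_swap,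
      Measure.map_id, (measurePreserving_prodAssoc μ2 μ1 μ3).map_eq]
  have hM5 : P.map (fun ω => ((W ω, ζ' ω), (ζ ω, V ω)))
      = (μ0.prod μ2).prod (μ1.prod μ3) := by
    have hc : (fun ω => ((W ω, ζ' ω), (ζ ω, V ω)))
        = (MeasurableEquiv.prodAssoc.symm : S₀ × S × S × ST ≃ᵐ (S₀ × S) × S × ST)
          ∘ ((Prod.map id (fun t : S × S × ST => (t.2.1, (t.1, t.2.2))))
          ∘ (fun ω => (W ω, ζ ω, ζ' ω, V ω))) := rfl
    have hτ : Measurable (fun t : S × S × ST => (t.2.1, (t.1, t.2.2))) := by fun_prop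
    rw [hc, ← Measure.map_map MeasurableEquiv.prodAssoc.symm.measurable
        ((measurable_id.prodMap hτ).comp hquad),
      ← Measure.map_map (measurable_id.prodMap hτ) hquad, hindep,
      ← Measure.map_prod_map _ _ measurable_id hτ, Measure.map_id, hτmap,
      ((measurePreserving_prodAssoc μ0 μ2 (μ1.prod μ3)).symm
        MeasurableEquiv.prodAssoc).map_eq]
  -- assemble
  set F := (fun ω => f (W ω, ζ ω, V ω)) with hFdef
  set F' := (fun ω => f (W ω, ζ' ω, V ω)) with hF'def
  have h3' : P.map (fun ω => (W ω, ζ' ω, V ω)) = P.map (fun ω => (W ω, ζ ω, V ω)) := by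
    rw [hM6, hM7, hid]
  have hLq' : MemLp F' (ENNReal.ofReal q) P := by
    have h1 : MemLp (f ∘ fun ω => (W ω, ζ ω, V ω)) (ENNReal.ofReal q) P := hLq
    have h2 := (memLp_map_measure_iff hf.aestronglyMeasurable
      (hW.prodMk (hζ.prodMk hV)).aemeasurable).mpr h1
    rw [← h3'] at h2
    exact (memLp_map_measure_iff hf.aestronglyMeasurable
      (hW.prodMk (hζ'.prodMk hV)).aemeasurable).mp h2
  have hFint : Integrable F P := hLq.integrable hp1
  have hF'int : Integrable F' P := hLq'.integrable hp1
  have hXY1 : P.map (fun ω => ((W ω, ζ ω), V ω))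
      = (P.map (fun ω => (W ω, ζ ω))).prod (P.map V) := by
    rw [hM4, hM1]
  have hXY2 : P.map (fun ω => ((W ω, ζ' ω), (ζ ω, V ω)))
      = (P.map (fun ω => (W ω, ζ' ω))).prod (P.map (fun ω => (ζ ω, V ω))) := by
    rw [hM5, hM2, hM3]
  have hh1 : Measurable (fun z : (S₀ × S) × ST => f (z.1.1, z.1.2, z.2)) :=
    hf.comp ((measurable_fst.comp measurable_fst).prodMk
      ((measurable_snd.comp measurable_fst).prodMk measurable_snd))
  have hh2 : Measurable (fun z : (S₀ × S) × (S × ST) => f (z.1.1, z.1.2, z.2.2)) :=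
    hf.comp ((measurable_fst.comp measurable_fst).prodMk
      ((measurable_snd.comp measurable_fst).prodMk (measurable_snd.comp measurable_snd)))
  have hA : condExp (MeasurableSpace.comap V inferInstance) P F
      =ᵐ[P] fun ω => ∫ x : S₀ × S, f (x.1, x.2, V ω) ∂(μ0.prod μ1) := by
    have h := condExp_indep_integral P (X := fun ω => (W ω, ζ ω)) (Y := V)
      (hW.prodMk hζ) hV hXY1 hh1 hFint
    rw [hM1] at h
    exact h
  have hB : condExp (MeasurableSpace.comap (fun ω => (ζ ω, V ω)) inferInstance) P F'
      =ᵐ[P] fun ω => ∫ x : S₀ × S, f (x.1, x.2, V ω) ∂(μ0.prod μ1) := by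
    have h := condExp_indep_integral P (X := fun ω => (W ω, ζ' ω))
      (Y := fun ω => (ζ ω, V ω)) (hW.prodMk hζ') (hζ.prodMk hV) hXY2 hh2 hF'int
    rw [hM2, hid] at h
    exact h
  have hAB : condExp (MeasurableSpace.comap V inferInstance) P F
      =ᵐ[P] condExp (MeasurableSpace.comap (fun ω => (ζ ω, V ω)) inferInstance) P F' :=
    hA.trans hB.symm
  have hsub : MemLp (F - F') (ENNReal.ofReal q) P := hLq.sub hLq'
  have hdiff : (condExp (MeasurableSpace.comap (fun ω => (ζ ω, V ω)) inferInstance) P F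
        - condExp (MeasurableSpace.comap V inferInstance) P F)
      =ᵐ[P] condExp (MeasurableSpace.comap (fun ω => (ζ ω, V ω)) inferInstance) P (F - F') := by
    have h1 := condExp_sub (m := MeasurableSpace.comap (fun ω => (ζ ω, V ω)) inferInstance)
      (μ := P) hFint hF'int
    filter_upwards [h1, hAB] with ω h1 h2
    simp only [Pi.sub_apply] at h1 ⊢
    rw [h1, h2]
  calc eLpNorm (condExp (MeasurableSpace.comap (fun ω => (ζ ω, V ω)) inferInstance) P F
        - condExp (MeasurableSpace.comap V inferInstance) P F) (ENNReal.ofReal q) P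
      = eLpNorm (condExp (MeasurableSpace.comap (fun ω => (ζ ω, V ω)) inferInstance) P (F - F'))
          (ENNReal.ofReal q) P := eLpNorm_congr_ae hdiff
    _ ≤ eLpNorm (F - F') (ENNReal.ofReal q) P :=
        eLpNorm_condExp_le_self P ((hζ.prodMk hV).comap_le) hq hsub
    _ = eLpNorm (fun ω => F ω - F' ω) (ENNReal.ofReal q) P := rfl
end
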